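/- Suppose B_0, B_k ∈ ℝ^{d×d} and B_k = B_0 + e_{i} c^T for some index i and vector c ∈ ℝ^d. Then B_k^T B_k − B_0^T B_0 = (B_k^T e_i)(B_k^T e_i)^T − (B_0^T e_i)(B_0^T e_i)^T, and hence this difference has rank at most 2. -/

import Mathlib

open Matrix

/-- If `B_k = B_0 + eᵢ cᵀ`, then
`Bₖᵀ Bₖ − B₀ᵀ B₀ = (Bₖᵀ eᵢ)(Bₖᵀ eᵢ)ᵀ − (B₀ᵀ eᵢ)(B₀ᵀ eᵢ)ᵀ`, and hence this
difference has rank at most 2. -/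
theorem stmt3 (d : ℕ) (B0 Bk : Matrix (Fin d) (Fin d) ℝ) (i : Fin d) (c : Fin d → ℝ)
    (h : Bk = B0 + Matrix.vecMulVec (Pi.single i 1) c) :
    Bkᵀ * Bk - B0ᵀ * B0 =
        Matrix.vecMulVec (Bkᵀ.mulVec (Pi.single i 1)) (Bkᵀ.mulVec (Pi.single i 1))
      - Matrix.vecMulVec (B0ᵀ.mulVec (Pi.single i 1)) (B0ᵀ.mulVec (Pi.single i 1))
    ∧ (Bkᵀ * Bk - B0ᵀ * B0).rank ≤ 2 := by
  have hu : Bkᵀ.mulVec (Pi.single i 1) = Bk i := by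
    ext a
    simp [mulVec, dotProduct, Pi.single_apply]
  have hv : B0ᵀ.mulVec (Pi.single i 1) = B0 i := by
    ext a
    simp [mulVec, dotProduct, Pi.single_apply]
  have hne : ∀ j, j ≠ i → Bk j = B0 j := by
    intro j hj
    ext a
    simp [h, vecMulVec_apply, Pi.single_apply, hj]
  have heq : Bkᵀ * Bk - B0ᵀ * B0 =
        Matrix.vecMulVec (Bkᵀ.mulVec (Pi.single i 1)) (Bkᵀ.mulVec (Pi.single i 1))
      - Matrix.vecMulVec (B0ᵀ.mulVec (Pi.single i 1)) (B0ᵀ.mulVec (Pi.single i 1)) := by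
    ext a b
    simp only [Matrix.sub_apply, mul_apply, vecMulVec_apply, hu, hv, transpose_apply]
    rw [← Finset.sum_sub_distrib]
    rw [Finset.sum_eq_single i]
    · intro j _ hj; rw [hne j hj]; ring
    · intro hmem; exact absurd (Finset.mem_univ i) hmem
  refine ⟨heq, ?_⟩
  rw [heq]
  set u := Bkᵀ.mulVec (Pi.single i 1) with hudef
  set v := B0ᵀ.mulVec (Pi.single i 1) with hvdef
  have hrange : LinearMap.range (Matrix.vecMulVec u u - Matrix.vecMulVec v v).mulVecLin
      ≤ Submodule.span ℝ {u, v} := by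
    rintro x ⟨y, rfl⟩
    have : (Matrix.vecMulVec u u - Matrix.vecMulVec v v).mulVec y
        = (u ⬝ᵥ y) • u - (v ⬝ᵥ y) • v := by
      ext a
      simp only [mulVec, dotProduct, vecMulVec_apply, Matrix.sub_apply, Pi.sub_apply, Pi.smul_apply,
        smul_eq_mul]
      rw [Finset.sum_mul, Finset.sum_mul, ← Finset.sum_sub_distrib]
      exact Finset.sum_congr rfl fun _ _ => by ring
    simp only [mulVecLin_apply, this]
    exact sub_mem
      (Submodule.smul_mem _ _ (Submodule.subset_span (by simp)))
      (Submodule.smul_mem _ _ (Submodule.subset_span (by simp)))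
  have := Submodule.finrank_mono hrange
  refine le_trans ?_ (le_trans (Submodule.finrank_mono hrange) ?_)
  · exact le_of_eq rfl
  · refine le_trans (finrank_span_le_card _) ?_
    have hfs : ({u, v} : Set (Fin d → ℝ)).toFinset = {u, v} := by simp
    rw [hfs]
    exact (Finset.card_insert_le _ _).trans (by simp)
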